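/- Let Π be a rectangular diagram of a surface and suppose a meridian m_{θ0} contains exactly two vertices of Π and these two vertices are free (belong to ∂Π). Then the event Ψ_Π(θ0) ↦ Ψ_Π(θ0+0) of the associated movie diagram has one of the forms {φ',φ''} ⟿ ∅ or ∅ ⟿ {φ',φ''}: exactly one chord is removed and none added, or exactly one chord is added and none removed. -/

import Mathlib

noncomputable section

/-- The circle `S¹ = ℝ/ℤ`. -/
abbrev S1 := AddCircle (1 : ℝ)

namespace RectDiag

instance : Fact ((0:ℝ) < 1) := ⟨one_pos⟩

/-- The length of the (positively oriented) arc from `x` to `y`, normalized in `[0,1)`. -/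
def arcLen (x y : S1) : ℝ := (AddCircle.equivIco 1 0 (y - x) : ℝ)

/-- The closed arc `[x;y]` from `x` to `y` with respect to the standard orientation. -/
def closedArc (x y : S1) : Set S1 :=
  {z | ∃ t : ℝ, 0 ≤ t ∧ t ≤ arcLen x y ∧ z = x + (t : S1)}

/-- The open arc `(x;y)`. -/
def openArc (x y : S1) : Set S1 :=
  {z | ∃ t : ℝ, 0 < t ∧ t < arcLen x y ∧ z = x + (t : S1)}

/-- The half-open arc `(x;y]`. -/
def arcIoc (x y : S1) : Set S1 :=
  {z | ∃ t : ℝ, 0 < t ∧ t ≤ arcLen x y ∧ z = x + (t : S1)}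

/-- A rectangle `[θ1;θ2] × [φ1;φ2]` in the torus `T² = S¹ × S¹`. -/
structure Rect where
  θ1 : S1
  θ2 : S1
  φ1 : S1
  φ2 : S1
  hθ : θ1 ≠ θ2
  hφ : φ1 ≠ φ2

/-- The underlying subset of the torus. -/
def Rect.toSet (r : Rect) : Set (S1 × S1) := closedArc r.θ1 r.θ2 ×ˢ closedArc r.φ1 r.φ2

/-- The vertex set `V(r) = {θ1,θ2} × {φ1,φ2}`. -/
def Rect.V (r : Rect) : Set (S1 × S1) := ({r.θ1, r.θ2} : Set S1) ×ˢ ({r.φ1, r.φ2} : Set S1)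

/-- Two rectangles are compatible if their intersection is empty, or consists of
common vertices, or is a rectangle disjoint from the vertices of both. -/
def Compatible (r1 r2 : Rect) : Prop :=
  r1.toSet ∩ r2.toSet = ∅ ∨
  (r1.toSet ∩ r2.toSet ⊆ r1.V ∧ r1.toSet ∩ r2.toSet ⊆ r2.V) ∨
  (∃ r : Rect, r1.toSet ∩ r2.toSet = r.toSet ∧ Disjoint r.toSet (r1.V ∪ r2.V))

/-- `v` is a free vertex of the collection `Rs` of rectangles:
it is a vertex of exactly one rectangle of `Rs`. -/
def FreeVertexOf (Rs : Set Rect) (v : S1 × S1) : Prop := ∃! r, r ∈ Rs ∧ v ∈ r.V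

/-- A rectangular diagram of a surface. -/
structure RectDiagram where
  rects : Set Rect
  finite : rects.Finite
  compat : ∀ r1 ∈ rects, ∀ r2 ∈ rects, r1 ≠ r2 → Compatible r1 r2
  free_meridian : ∀ θ : S1, ∃ a b : S1 × S1,
    {v | FreeVertexOf rects v ∧ v.1 = θ} ⊆ {a, b}
  free_longitude : ∀ φ : S1, ∃ a b : S1 × S1,
    {v | FreeVertexOf rects v ∧ v.2 = φ} ⊆ {a, b}

/-- The boundary `∂Π`: the set of free vertices. -/
def RectDiagram.boundary (P : RectDiagram) : Set (S1 × S1) := {v | FreeVertexOf P.rects v}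

/-- The set of all vertices of the diagram. -/
def RectDiagram.vertexSet (P : RectDiagram) : Set (S1 × S1) := ⋃ r ∈ P.rects, r.V

/-- The meridian `m_θ` is an occupied level of `P`. -/
def OccupiedMeridian (P : RectDiagram) (θ : S1) : Prop := ∃ v ∈ P.vertexSet, v.1 = θ

/-- Two chords of `S¹` do not cross. -/
def ChordsNoncross (c c' : Set S1) : Prop :=
  ∀ a b : S1, c = {a, b} → c' ⊆ openArc a b ∨ c' ⊆ openArc b a

/-- A non-crossing chord diagram: a finite set of chords (unordered pairs of distinct
points of `S¹`) that pairwise do not cross. -/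
def IsNCD (C : Set (Set S1)) : Prop :=
  C.Finite ∧ (∀ c ∈ C, ∃ a b : S1, a ≠ b ∧ c = {a, b}) ∧
  ∀ c ∈ C, ∀ c' ∈ C, c ≠ c' → ChordsNoncross c c'

/-- Any chord between two points of `R` can be added to `C` keeping it non-crossing. -/
def Extendable (C : Set (Set S1)) (R : Set S1) : Prop :=
  ∀ a ∈ R, ∀ b ∈ R, a ≠ b → IsNCD (insert ({a, b} : Set S1) C)

/-- A region of a non-crossing chord diagram `C`: a maximal subset `R ⊆ S¹` such that
any chord joining two distinct points of `R` can be added to `C` keeping it non-crossing. -/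
def IsRegion (C : Set (Set S1)) (R : Set S1) : Prop :=
  Extendable C R ∧ ∀ R', Extendable C R' → R ⊆ R' → R' = R

/-- Two regions are neighboring: distinct, their boundaries share exactly two points,
and these two points form a chord of `C`. -/
def Neighboring (C : Set (Set S1)) (R R' : Set S1) : Prop :=
  IsRegion C R ∧ IsRegion C R' ∧ R ≠ R' ∧
  ∃ a b : S1, a ≠ b ∧ frontier R ∩ frontier R' = {a, b} ∧ ({a, b} : Set S1) ∈ C

/-- The points `φ 0, …, φ (k-1)` follow on `S¹` in this circular order. -/
def CircOrd (k : ℕ) (φ : ℕ → S1) : Prop :=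
  ∃ t : ℕ → ℝ, (∀ i j : ℕ, i < j → j < k → t i < t j) ∧
    (∀ i : ℕ, i < k → t i < t 0 + 1) ∧
    ∀ i : ℕ, i < k → φ i = ((t i : ℝ) : S1)

/-- The chords `{φ1,φ2},{φ3,φ4},…,{φ_{k-1},φ_k}` (for `k` even; `0`-based indices). -/
def pairsRemovedEven (k : ℕ) (φ : ℕ → S1) : Set (Set S1) :=
  {c | ∃ i : ℕ, 2*i+1 < k ∧ c = ({φ (2*i), φ (2*i+1)} : Set S1)}

/-- The chords `{φ1,φ2},{φ3,φ4},…,{φ_{k-2},φ_{k-1}}` (for `k` odd). -/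
def pairsRemovedOdd (k : ℕ) (φ : ℕ → S1) : Set (Set S1) :=
  {c | ∃ i : ℕ, 2*i+2 < k ∧ c = ({φ (2*i), φ (2*i+1)} : Set S1)}

/-- The chords `{φ2,φ3},{φ4,φ5},…` added by an event. -/
def pairsAdded (k : ℕ) (φ : ℕ → S1) : Set (Set S1) :=
  {c | ∃ i : ℕ, 2*i+2 < k ∧ c = ({φ (2*i+1), φ (2*i+2)} : Set S1)}

/-- The wrap-around chord `{φ_k, φ1}`. -/
def wrapChord (k : ℕ) (φ : ℕ → S1) : Set S1 := {φ (k-1), φ 0}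

/-- The admissible event (in the forward direction) determined by the circularly
ordered points `φ 0, …, φ (k-1)`, of one of the three types. -/
def EventFwd (k : ℕ) (φ : ℕ → S1) (C1 C2 : Set (Set S1)) : Prop :=
  2 ≤ k ∧ CircOrd k φ ∧
  ((Even k ∧ pairsRemovedEven k φ ⊆ C1 ∧
      C2 = (C1 \ pairsRemovedEven k φ) ∪ pairsAdded k φ) ∨
   (Odd k ∧ pairsRemovedOdd k φ ⊆ C1 ∧
      C2 = (C1 \ pairsRemovedOdd k φ) ∪ pairsAdded k φ) ∨
   (Even k ∧ 4 ≤ k ∧ pairsRemovedEven k φ ⊆ C1 ∧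
      C2 = (C1 \ pairsRemovedEven k φ) ∪ (pairsAdded k φ ∪ {wrapChord k φ})))

/-- `C1 ↦ C2` is an admissible event with involved points `φ 0, …, φ (k-1)`
(one of the diagrams, whichever of the two, is obtained from the other). -/
def AdmissibleEventVia (k : ℕ) (φ : ℕ → S1) (C1 C2 : Set (Set S1)) : Prop :=
  EventFwd k φ C1 C2 ∨ EventFwd k φ C2 C1

/-- `C1 ↦ C2` is an admissible event of non-crossing chord diagrams. -/
def AdmissibleEvent (C1 C2 : Set (Set S1)) : Prop :=
  IsNCD C1 ∧ IsNCD C2 ∧ ∃ (k : ℕ) (φ : ℕ → S1), AdmissibleEventVia k φ C1 C2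

/-- The chords of the movie of `P` visible at the meridian `m_{θ0}` (for `θ0` in the
open `θ`-interval of a rectangle of `P`). -/
def movieAt (P : RectDiagram) (θ0 : S1) : Set (Set S1) :=
  {c | ∃ r ∈ P.rects, θ0 ∈ openArc r.θ1 r.θ2 ∧ c = ({r.φ1, r.φ2} : Set S1)}

/-- The movie diagram `Ψ_P` associated with `P`: the left continuous extension of
`movieAt`. -/
def moviePsi (P : RectDiagram) (θ0 : S1) : Set (Set S1) :=
  {c | ∃ ε > (0:ℝ), ∀ t : ℝ, 0 < t → t < ε → c ∈ movieAt P (θ0 - (t : S1))}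

/-- The right limit `Ψ_P(θ0+0)`. -/
def moviePsiRight (P : RectDiagram) (θ0 : S1) : Set (Set S1) :=
  {c | ∃ ε > (0:ℝ), ∀ t : ℝ, 0 < t → t < ε → c ∈ movieAt P (θ0 + (t : S1))}

/-- A vertical bubble creation move `P ↦ P'` replacing `r = [θ1;θ2]×[φ1;φ2] ∈ P` by
`r1 = [θ1;θ3]×[φ1;φ2]`, `r2 = [θ3;θ4]×[φ2;φ1]`, `r3 = [θ4;θ2]×[φ1;φ2]`. -/
def IsBubbleMove (P P' : RectDiagram) (r r1 r2 r3 : Rect) (θ3 θ4 : S1) : Prop :=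
  r ∈ P.rects ∧
  θ3 ∈ openArc r.θ1 r.θ2 ∧ θ4 ∈ openArc θ3 r.θ2 ∧
  (∀ θ ∈ closedArc θ3 θ4, ¬ OccupiedMeridian P θ) ∧
  (∀ r' ∈ P.rects, ¬ (closedArc θ3 θ4 ×ˢ closedArc r.φ1 r.φ2 ⊆ interior r'.toSet)) ∧
  (r1.θ1 = r.θ1 ∧ r1.θ2 = θ3 ∧ r1.φ1 = r.φ1 ∧ r1.φ2 = r.φ2) ∧
  (r2.θ1 = θ3 ∧ r2.θ2 = θ4 ∧ r2.φ1 = r.φ2 ∧ r2.φ2 = r.φ1) ∧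
  (r3.θ1 = θ4 ∧ r3.θ2 = r.θ2 ∧ r3.φ1 = r.φ1 ∧ r3.φ2 = r.φ2) ∧
  P'.rects = (P.rects \ {r}) ∪ {r1, r2, r3}


section Aux

lemma coe_arcLen (x y : S1) : ((arcLen x y : ℝ) : S1) = y - x :=
  (AddCircle.equivIco 1 0).symm_apply_apply (y - x)

lemma arcLen_mem (x y : S1) : arcLen x y ∈ Set.Ico (0:ℝ) 1 := by
  have := (AddCircle.equivIco 1 0 (y - x)).2
  simpa [arcLen] using this

lemma arcLen_nonneg (x y : S1) : 0 ≤ arcLen x y := (arcLen_mem x y).1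
lemma arcLen_lt_one (x y : S1) : arcLen x y < 1 := (arcLen_mem x y).2

lemma add_arcLen (x y : S1) : x + (arcLen x y : S1) = y := by
  rw [coe_arcLen]; abel

lemma coe_inj {u v : ℝ} (hu : u ∈ Set.Ico (0:ℝ) 1) (hv : v ∈ Set.Ico (0:ℝ) 1)
    (h : (u : S1) = (v : S1)) : u = v := by
  rwa [AddCircle.coe_eq_coe_iff_of_mem_Ico (a := 0) (by simpa using hu) (by simpa using hv)] at h

lemma arcLen_pos {x y : S1} (h : x ≠ y) : 0 < arcLen x y := by
  rcases (arcLen_nonneg x y).lt_or_eq with h' | h'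
  · exact h'
  · exfalso; apply h
    have := coe_arcLen x y
    rw [← h'] at this
    simp at this
    exact (sub_eq_zero.mp this.symm).symm

lemma exists_rep (x z : S1) : z = x + ((arcLen x z : ℝ) : S1) := (add_arcLen x z).symm

lemma mem_closedArc_iff {x y : S1} {u : ℝ} (hu : u ∈ Set.Ico (0:ℝ) 1) :
    x + (u : S1) ∈ closedArc x y ↔ 0 ≤ u ∧ u ≤ arcLen x y := by
  constructor
  · rintro ⟨t, ht0, htL, he⟩
    have ht1 : t ∈ Set.Ico (0:ℝ) 1 := ⟨ht0, lt_of_le_of_lt htL (arcLen_lt_one x y)⟩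
    have : (u : S1) = (t : S1) := add_left_cancel he
    rw [coe_inj hu ht1 this]; exact ⟨ht0, htL⟩
  · rintro ⟨h0, hL⟩
    exact ⟨u, h0, hL, rfl⟩

lemma mem_openArc_iff {x y : S1} {u : ℝ} (hu : u ∈ Set.Ico (0:ℝ) 1) :
    x + (u : S1) ∈ openArc x y ↔ 0 < u ∧ u < arcLen x y := by
  constructor
  · rintro ⟨t, ht0, htL, he⟩
    have ht1 : t ∈ Set.Ico (0:ℝ) 1 := ⟨le_of_lt ht0, htL.trans (arcLen_lt_one x y)⟩
    have : (u : S1) = (t : S1) := add_left_cancel he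
    rw [coe_inj hu ht1 this]; exact ⟨ht0, htL⟩
  · rintro ⟨h0, hL⟩
    exact ⟨u, h0, hL, rfl⟩

lemma openArc_subset_closedArc (x y : S1) : openArc x y ⊆ closedArc x y := by
  rintro z ⟨t, h0, hL, he⟩; exact ⟨t, le_of_lt h0, le_of_lt hL, he⟩

lemma self_mem_closedArc (x y : S1) : x ∈ closedArc x y :=
  ⟨0, le_refl 0, arcLen_nonneg x y, by simp⟩

lemma right_mem_closedArc (x y : S1) : y ∈ closedArc x y :=
  ⟨arcLen x y, arcLen_nonneg x y, le_refl _, (add_arcLen x y).symm⟩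

lemma self_not_mem_openArc (x y : S1) : x ∉ openArc x y := by
  rintro ⟨t, h0, hL, he⟩
  have h1 : ((0:ℝ) : S1) = (t : S1) := add_left_cancel (a := x) (by simpa using he.symm)
  have := coe_inj (by norm_num) ⟨le_of_lt h0, hL.trans (arcLen_lt_one x y)⟩ h1
  exact absurd h0 (by rw [← this]; exact lt_irrefl 0)

lemma right_not_mem_openArc (x y : S1) : y ∉ openArc x y := by
  rintro ⟨t, h0, hL, he⟩
  have h1 : ((arcLen x y : ℝ) : S1) = (t : S1) :=
    add_left_cancel (a := x) (by rw [add_arcLen, ← he])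
  have := coe_inj (arcLen_mem x y) ⟨le_of_lt h0, hL.trans (arcLen_lt_one x y)⟩ h1
  rw [← this] at hL; exact lt_irrefl _ hL

lemma coe_sub' (s t : ℝ) : ((s - t:ℝ):S1) = (s:S1) - (t:S1) := by
  exact_mod_cast (QuotientAddGroup.mk_sub _ s t)
lemma coe_add' (s t : ℝ) : ((s + t:ℝ):S1) = (s:S1) + (t:S1) := by
  exact_mod_cast (QuotientAddGroup.mk_add _ s t)

lemma left_good_right_end {x y : S1} (hxy : x ≠ y) :
    ∃ ε > 0, ∀ t : ℝ, 0 < t → t < ε → y - (t:S1) ∈ openArc x y := by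
  refine ⟨arcLen x y, arcLen_pos hxy, fun t ht0 htL => ?_⟩
  refine ⟨arcLen x y - t, by linarith, by linarith, ?_⟩
  rw [coe_sub', ← add_sub_assoc, add_arcLen]

lemma right_good_left_end {x y : S1} (hxy : x ≠ y) :
    ∃ ε > 0, ∀ t : ℝ, 0 < t → t < ε → x + (t:S1) ∈ openArc x y :=
  ⟨arcLen x y, arcLen_pos hxy, fun t ht0 htL => ⟨t, ht0, htL, rfl⟩⟩

lemma good_of_mem_open {x y θ : S1} (h : θ ∈ openArc x y) :
    ∃ ε > 0, ∀ t : ℝ, 0 < t → t < ε →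
      (θ - (t:S1) ∈ openArc x y ∧ θ + (t:S1) ∈ openArc x y) := by
  obtain ⟨s, hs0, hsL, he⟩ := h
  refine ⟨min s (arcLen x y - s), lt_min hs0 (by linarith), fun t ht0 htε => ?_⟩
  have h1 : t < s := lt_of_lt_of_le htε (min_le_left _ _)
  have h2 : t < arcLen x y - s := lt_of_lt_of_le htε (min_le_right _ _)
  constructor
  · refine ⟨s - t, by linarith, by linarith, ?_⟩
    rw [he, coe_sub', add_sub_assoc]
  · refine ⟨s + t, by linarith, by linarith, ?_⟩
    rw [he, coe_add', add_assoc]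

lemma coe_one : ((1:ℝ):S1) = 0 := AddCircle.coe_period 1

lemma left_bad {x y θ : S1} (h1 : θ ∉ openArc x y) (h2 : θ ≠ y) :
    ∃ ε > 0, ∀ t : ℝ, 0 < t → t < ε → θ - (t:S1) ∉ openArc x y := by
  have hθ : θ = x + ((arcLen x θ : ℝ):S1) := (add_arcLen x θ).symm
  have hs := arcLen_mem x θ
  have hL := arcLen_mem x y
  rcases eq_or_lt_of_le hs.1 with hs0 | hs0
  · have hθx : θ = x := by rw [hθ]; rw [← hs0]; simp
    refine ⟨1 - arcLen x y, by linarith [hL.2], fun t ht0 htε => ?_⟩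
    have he : θ - (t:S1) = x + ((1 - t : ℝ) : S1) := by
      rw [hθx, coe_sub', coe_one]; abel
    intro hmem
    rw [he] at hmem
    have := (mem_openArc_iff (u := 1 - t) ⟨by linarith [hL.1], by linarith⟩).mp hmem
    linarith [this.2]
  · have hsL : arcLen x y < arcLen x θ := by
      rcases lt_trichotomy (arcLen x θ) (arcLen x y) with h | h | h
      · exact absurd (show θ ∈ openArc x y from hθ ▸ ⟨arcLen x θ, hs0, h, rfl⟩) h1
      · exact absurd (by rw [hθ, h, add_arcLen]) h2
      · exact h
    refine ⟨arcLen x θ - arcLen x y, by linarith, fun t ht0 htε => ?_⟩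
    have he : θ - (t:S1) = x + ((arcLen x θ - t : ℝ) : S1) := by
      conv_lhs => rw [hθ]
      rw [coe_sub', add_sub_assoc]
    intro hmem
    rw [he] at hmem
    have := (mem_openArc_iff (u := arcLen x θ - t) ⟨by linarith [hL.1], by linarith [hs.2]⟩).mp hmem
    linarith [this.2]

lemma right_bad {x y θ : S1} (h1 : θ ∉ openArc x y) (h2 : θ ≠ x) :
    ∃ ε > 0, ∀ t : ℝ, 0 < t → t < ε → θ + (t:S1) ∉ openArc x y := by
  have hθ : θ = x + ((arcLen x θ : ℝ):S1) := (add_arcLen x θ).symm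
  have hs := arcLen_mem x θ
  have hL := arcLen_mem x y
  have hs0 : 0 < arcLen x θ := by
    rcases eq_or_lt_of_le hs.1 with h | h
    · exact absurd (by rw [hθ]; rw [← h]; simp) h2
    · exact h
  have hsL : arcLen x y ≤ arcLen x θ := by
    by_contra hcon
    exact h1 (hθ ▸ ⟨arcLen x θ, hs0, not_le.mp hcon, rfl⟩)
  refine ⟨1 - arcLen x θ, by linarith [hs.2], fun t ht0 htε => ?_⟩
  have he : θ + (t:S1) = x + ((arcLen x θ + t : ℝ) : S1) := by
    conv_lhs => rw [hθ]
    rw [coe_add', add_assoc]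
  intro hmem
  rw [he] at hmem
  have := (mem_openArc_iff (u := arcLen x θ + t) ⟨by linarith, by linarith⟩).mp hmem
  linarith [this.2, hsL]

lemma exists_pos_le {α : Type*} (s : Set α) (hs : s.Finite) (f : α → ℝ)
    (hf : ∀ a ∈ s, 0 < f a) : ∃ ε > 0, ∀ a ∈ s, ε ≤ f a := by
  refine Set.Finite.induction_on
    (motive := fun s _ => (∀ a ∈ s, 0 < f a) → ∃ ε > 0, ∀ a ∈ s, ε ≤ f a) s hs ?_ ?_ hf
  · exact fun _ => ⟨1, one_pos, fun a ha => absurd ha (Set.notMem_empty a)⟩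
  · intro a s ha hsf ih hf'
    obtain ⟨ε, hε, hle⟩ := ih (fun b hb => hf' b (Set.mem_insert_of_mem a hb))
    refine ⟨min (f a) ε, lt_min (hf' a (Set.mem_insert a s)) hε, fun b hb => ?_⟩
    rcases hb with rfl | hb
    · exact min_le_left _ _
    · exact le_trans (min_le_right _ _) (hle b hb)

lemma moviePsi_eq (P : RectDiagram) (θ0 : S1) :
    moviePsi P θ0 = {c | ∃ r ∈ P.rects,
      (θ0 ∈ openArc r.θ1 r.θ2 ∨ θ0 = r.θ2) ∧ c = ({r.φ1, r.φ2} : Set S1)} := by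
  classical
  ext c; constructor
  · rintro ⟨ε, hε, hall⟩
    have key : ∀ r : Rect, ∃ δ : ℝ, 0 < δ ∧
        (¬(θ0 ∈ openArc r.θ1 r.θ2 ∨ θ0 = r.θ2) →
          ∀ t : ℝ, 0 < t → t < δ → θ0 - (t:S1) ∉ openArc r.θ1 r.θ2) := by
      intro r
      by_cases h : θ0 ∈ openArc r.θ1 r.θ2 ∨ θ0 = r.θ2
      · exact ⟨1, one_pos, fun hc => absurd h hc⟩
      · obtain ⟨δ, hδ, hp⟩ := left_bad (fun hc => h (Or.inl hc)) (fun hc => h (Or.inr hc))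
        exact ⟨δ, hδ, fun _ => hp⟩
    choose f hf0 hfp using key
    obtain ⟨ε0, hε0, hle⟩ := exists_pos_le P.rects P.finite f (fun a _ => hf0 a)
    have hmin : 0 < min ε ε0 := lt_min hε hε0
    have ht0 : 0 < min ε ε0 / 2 := by positivity
    have htε : min ε ε0 / 2 < ε := lt_of_lt_of_le (half_lt_self hmin) (min_le_left _ _)
    have htε0 : min ε ε0 / 2 < ε0 := lt_of_lt_of_le (half_lt_self hmin) (min_le_right _ _)
    obtain ⟨r, hr, hmem, hc⟩ := hall _ ht0 htε
    refine ⟨r, hr, ?_, hc⟩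
    by_contra hcon
    exact hfp r hcon _ ht0 (lt_of_lt_of_le htε0 (hle r hr)) hmem
  · rintro ⟨r, hr, hgood, hc⟩
    rcases hgood with hopen | hend
    · obtain ⟨ε, hε, hp⟩ := good_of_mem_open hopen
      exact ⟨ε, hε, fun t ht htε => ⟨r, hr, (hp t ht htε).1, hc⟩⟩
    · obtain ⟨ε, hε, hp⟩ := left_good_right_end r.hθ
      exact ⟨ε, hε, fun t ht htε => ⟨r, hr, by rw [hend]; exact hp t ht htε, hc⟩⟩

lemma moviePsiRight_eq (P : RectDiagram) (θ0 : S1) :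
    moviePsiRight P θ0 = {c | ∃ r ∈ P.rects,
      (θ0 ∈ openArc r.θ1 r.θ2 ∨ θ0 = r.θ1) ∧ c = ({r.φ1, r.φ2} : Set S1)} := by
  classical
  ext c; constructor
  · rintro ⟨ε, hε, hall⟩
    have key : ∀ r : Rect, ∃ δ : ℝ, 0 < δ ∧
        (¬(θ0 ∈ openArc r.θ1 r.θ2 ∨ θ0 = r.θ1) →
          ∀ t : ℝ, 0 < t → t < δ → θ0 + (t:S1) ∉ openArc r.θ1 r.θ2) := by
      intro r
      by_cases h : θ0 ∈ openArc r.θ1 r.θ2 ∨ θ0 = r.θ1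
      · exact ⟨1, one_pos, fun hc => absurd h hc⟩
      · obtain ⟨δ, hδ, hp⟩ := right_bad (fun hc => h (Or.inl hc)) (fun hc => h (Or.inr hc))
        exact ⟨δ, hδ, fun _ => hp⟩
    choose f hf0 hfp using key
    obtain ⟨ε0, hε0, hle⟩ := exists_pos_le P.rects P.finite f (fun a _ => hf0 a)
    have hmin : 0 < min ε ε0 := lt_min hε hε0
    have ht0 : 0 < min ε ε0 / 2 := by positivity
    have htε : min ε ε0 / 2 < ε := lt_of_lt_of_le (half_lt_self hmin) (min_le_left _ _)
    have htε0 : min ε ε0 / 2 < ε0 := lt_of_lt_of_le (half_lt_self hmin) (min_le_right _ _)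
    obtain ⟨r, hr, hmem, hc⟩ := hall _ ht0 htε
    refine ⟨r, hr, ?_, hc⟩
    by_contra hcon
    exact hfp r hcon _ ht0 (lt_of_lt_of_le htε0 (hle r hr)) hmem
  · rintro ⟨r, hr, hgood, hc⟩
    rcases hgood with hopen | hend
    · obtain ⟨ε, hε, hp⟩ := good_of_mem_open hopen
      exact ⟨ε, hε, fun t ht htε => ⟨r, hr, (hp t ht htε).2, hc⟩⟩
    · obtain ⟨ε, hε, hp⟩ := right_good_left_end r.hθ
      exact ⟨ε, hε, fun t ht htε => ⟨r, hr, by rw [hend]; exact hp t ht htε, hc⟩⟩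

lemma mem_V {r : Rect} {v : S1 × S1} :
    v ∈ r.V ↔ (v.1 = r.θ1 ∨ v.1 = r.θ2) ∧ (v.2 = r.φ1 ∨ v.2 = r.φ2) := by
  simp [Rect.V]

lemma cancel_coe {x : S1} {u v : ℝ} (hu : u ∈ Set.Ico (0:ℝ) 1) (hv : v ∈ Set.Ico (0:ℝ) 1)
    (h : x + (u : S1) = x + (v : S1)) : u = v :=
  coe_inj hu hv (add_left_cancel h)

lemma chord_not_reused (P : RectDiagram) (θ0 : S1) (r0 : Rect) (hr0 : r0 ∈ P.rects)
    (hθ : θ0 = r0.θ1 ∨ θ0 = r0.θ2) :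
    ¬ ∃ r' ∈ P.rects, θ0 ∈ openArc r'.θ1 r'.θ2 ∧
      ({r'.φ1, r'.φ2} : Set S1) = ({r0.φ1, r0.φ2} : Set S1) := by
  rintro ⟨r', hr', hopen, hφeq⟩
  have hne : r0 ≠ r' := by
    rintro rfl
    rcases hθ with h | h
    · exact self_not_mem_openArc _ _ (h ▸ hopen)
    · exact right_not_mem_openArc _ _ (h ▸ hopen)
  have hL := arcLen_mem r0.θ1 r0.θ2
  have hLpos : 0 < arcLen r0.θ1 r0.θ2 := arcLen_pos r0.hθ
  have hp1 : ((θ0, r0.φ1) : S1 × S1) ∈ r0.toSet := by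
    refine ⟨?_, self_mem_closedArc _ _⟩
    rcases hθ with h | h
    · rw [h]; exact self_mem_closedArc _ _
    · rw [h]; exact right_mem_closedArc _ _
  have hφmem : r0.φ1 ∈ closedArc r'.φ1 r'.φ2 := by
    have h1 : r0.φ1 ∈ ({r'.φ1, r'.φ2} : Set S1) := by rw [hφeq]; exact Set.mem_insert _ _
    rcases h1 with h | h
    · rw [← h]; exact self_mem_closedArc _ _
    · rw [show r0.φ1 = r'.φ2 from h]; exact right_mem_closedArc _ _
  have hp2 : ((θ0, r0.φ1) : S1 × S1) ∈ r'.toSet :=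
    ⟨openArc_subset_closedArc _ _ hopen, hφmem⟩
  have hpV : ((θ0, r0.φ1) : S1 × S1) ∈ r0.V := mem_V.mpr ⟨hθ, Or.inl rfl⟩
  rcases P.compat r0 hr0 r' hr' hne with hemp | ⟨hsub, -⟩ | ⟨r'', heq, hdisj⟩
  · exact absurd (Set.mem_inter hp1 hp2) (by rw [hemp]; exact Set.notMem_empty _)
  · obtain ⟨ε, hε, hgood⟩ := good_of_mem_open hopen
    have hmin : 0 < min ε (arcLen r0.θ1 r0.θ2) := lt_min hε hLpos
    set t := min ε (arcLen r0.θ1 r0.θ2) / 2 with htdef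
    have ht0 : 0 < t := by positivity
    have htε : t < ε := lt_of_lt_of_le (half_lt_self hmin) (min_le_left _ _)
    have htL : t < arcLen r0.θ1 r0.θ2 := lt_of_lt_of_le (half_lt_self hmin) (min_le_right _ _)
    have ht1 : t < 1 := htL.trans hL.2
    rcases hθ with hθ1 | hθ2
    · -- θ0 = r0.θ1, go right
      have he : θ0 + (t:S1) = r0.θ1 + ((t:ℝ) : S1) := by rw [hθ1]
      have hq1 : θ0 + (t:S1) ∈ closedArc r0.θ1 r0.θ2 := by
        rw [he]; exact ⟨t, le_of_lt ht0, le_of_lt htL, rfl⟩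
      have hq2 : θ0 + (t:S1) ∈ closedArc r'.θ1 r'.θ2 :=
        openArc_subset_closedArc _ _ (hgood t ht0 htε).2
      have hq : ((θ0 + (t:S1), r0.φ1) : S1 × S1) ∈ r0.toSet ∩ r'.toSet :=
        ⟨⟨hq1, self_mem_closedArc _ _⟩, ⟨hq2, hφmem⟩⟩
      rcases (mem_V.mp (hsub hq)).1 with hc | hc
      · dsimp at hc
        rw [he] at hc
        have : r0.θ1 + ((t:ℝ):S1) = r0.θ1 + ((0:ℝ):S1) := by rw [hc]; simp
        have := cancel_coe ⟨le_of_lt ht0, ht1⟩ ⟨le_refl 0, one_pos⟩ this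
        linarith
      · dsimp at hc
        rw [he] at hc
        have : r0.θ1 + ((t:ℝ):S1) = r0.θ1 + ((arcLen r0.θ1 r0.θ2 :ℝ):S1) := by
          rw [hc, add_arcLen]
        have := cancel_coe ⟨le_of_lt ht0, ht1⟩ hL this
        linarith
    · -- θ0 = r0.θ2, go left
      have he : θ0 - (t:S1) = r0.θ1 + ((arcLen r0.θ1 r0.θ2 - t : ℝ) : S1) := by
        rw [hθ2, coe_sub', ← add_sub_assoc, add_arcLen]
      have hq1 : θ0 - (t:S1) ∈ closedArc r0.θ1 r0.θ2 := by
        rw [he]; exact ⟨_, by linarith, by linarith, rfl⟩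
      have hq2 : θ0 - (t:S1) ∈ closedArc r'.θ1 r'.θ2 :=
        openArc_subset_closedArc _ _ (hgood t ht0 htε).1
      have hq : ((θ0 - (t:S1), r0.φ1) : S1 × S1) ∈ r0.toSet ∩ r'.toSet :=
        ⟨⟨hq1, self_mem_closedArc _ _⟩, ⟨hq2, hφmem⟩⟩
      have hmem : arcLen r0.θ1 r0.θ2 - t ∈ Set.Ico (0:ℝ) 1 := ⟨by linarith, by linarith [hL.2]⟩
      rcases (mem_V.mp (hsub hq)).1 with hc | hc
      · dsimp at hc
        rw [he] at hc
        have : r0.θ1 + ((arcLen r0.θ1 r0.θ2 - t:ℝ):S1) = r0.θ1 + ((0:ℝ):S1) := by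
          rw [hc]; simp
        have := cancel_coe hmem ⟨le_refl 0, one_pos⟩ this
        linarith
      · dsimp at hc
        rw [he] at hc
        have : r0.θ1 + ((arcLen r0.θ1 r0.θ2 - t:ℝ):S1)
            = r0.θ1 + ((arcLen r0.θ1 r0.θ2 :ℝ):S1) := by rw [hc, add_arcLen]
        have := cancel_coe hmem hL this
        linarith
  · have hm : ((θ0, r0.φ1) : S1 × S1) ∈ r''.toSet := heq ▸ Set.mem_inter hp1 hp2
    exact (Set.disjoint_left.mp hdisj hm) (Set.mem_union_left _ hpV)

end Aux

/-- if a meridian `m_{θ0}` contains exactly two vertices of `P`, both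
free, then the event of the movie diagram at `θ0` removes exactly one chord and adds
none, or adds exactly one chord and removes none. -/
theorem two_free_vertices_event (P : RectDiagram) (θ0 : S1)
    (h : ∃ v1 v2 : S1 × S1, v1 ≠ v2 ∧
      {v : S1 × S1 | v ∈ P.vertexSet ∧ v.1 = θ0} = {v1, v2} ∧
      FreeVertexOf P.rects v1 ∧ FreeVertexOf P.rects v2) :
    (∃ c ∈ moviePsi P θ0, moviePsiRight P θ0 = moviePsi P θ0 \ {c}) ∨
    (∃ c : Set S1, c ∉ moviePsi P θ0 ∧ moviePsiRight P θ0 = moviePsi P θ0 ∪ {c}) := by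
  classical
  obtain ⟨v1, v2, hne, hset, hf1, hf2⟩ := h
  have hv1 : v1 ∈ P.vertexSet ∧ v1.1 = θ0 := by
    have h1 : v1 ∈ ({v1, v2} : Set (S1 × S1)) := Set.mem_insert _ _
    rw [← hset] at h1; exact h1
  obtain ⟨r0, hr0, hv1V⟩ : ∃ r ∈ P.rects, v1 ∈ r.V := by
    simpa [RectDiagram.vertexSet] using hv1.1
  have hθ0r0 : θ0 = r0.θ1 ∨ θ0 = r0.θ2 := by
    rcases (mem_V.mp hv1V).1 with h' | h'
    · left; rw [← hv1.2]; exact h'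
    · right; rw [← hv1.2]; exact h'
  have hmerid : ∀ r ∈ P.rects, (θ0 = r.θ1 ∨ θ0 = r.θ2) → ∀ φ : S1, (φ = r.φ1 ∨ φ = r.φ2) →
      ((θ0, φ) : S1 × S1) ∈ ({v1, v2} : Set (S1 × S1)) := by
    intro r hr hθ φ hφ
    rw [← hset]
    exact ⟨Set.mem_biUnion hr (mem_V.mpr ⟨hθ, hφ⟩), rfl⟩
  have huniq : ∀ r ∈ P.rects, (θ0 = r.θ1 ∨ θ0 = r.θ2) → r = r0 := by
    intro r hr hθ
    have h1 := hmerid r hr hθ r.φ1 (Or.inl rfl)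
    have h2 := hmerid r hr hθ r.φ2 (Or.inr rfl)
    have hd : ((θ0, r.φ1) : S1 × S1) ≠ (θ0, r.φ2) := fun hc => r.hφ (congrArg Prod.snd hc)
    have hv1r : v1 ∈ r.V := by
      rcases h1 with e1 | e1
      · rw [← e1]; exact mem_V.mpr ⟨hθ, Or.inl rfl⟩
      · rcases h2 with e2 | e2
        · rw [← e2]; exact mem_V.mpr ⟨hθ, Or.inr rfl⟩
        · exact absurd (e1.trans e2.symm) hd
    exact hf1.unique ⟨hr, hv1r⟩ ⟨hr0, hv1V⟩
  set c0 : Set S1 := {r0.φ1, r0.φ2} with hc0def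
  set A : Set (Set S1) :=
    {c | ∃ r ∈ P.rects, θ0 ∈ openArc r.θ1 r.θ2 ∧ c = ({r.φ1, r.φ2} : Set S1)} with hAdef
  have hc0A : c0 ∉ A := by
    rintro ⟨r', hr', hopen, hc⟩
    exact chord_not_reused P θ0 r0 hr0 hθ0r0 ⟨r', hr', hopen, hc.symm⟩
  rcases hθ0r0 with hθ1 | hθ2
  · -- θ0 = r0.θ1 : a chord is added
    right
    have hpsi : moviePsi P θ0 = A := by
      rw [moviePsi_eq]; ext c; constructor
      · rintro ⟨r, hr, hcase, hc⟩
        rcases hcase with hopen | hend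
        · exact ⟨r, hr, hopen, hc⟩
        · have hrr := huniq r hr (Or.inr hend)
          subst hrr
          exact absurd (hθ1.symm.trans hend) r.hθ
      · rintro ⟨r, hr, hopen, hc⟩; exact ⟨r, hr, Or.inl hopen, hc⟩
    have hpsiR : moviePsiRight P θ0 = A ∪ {c0} := by
      rw [moviePsiRight_eq]; ext c; constructor
      · rintro ⟨r, hr, hcase, hc⟩
        rcases hcase with hopen | hend
        · exact Or.inl ⟨r, hr, hopen, hc⟩
        · have hrr := huniq r hr (Or.inl hend)
          subst hrr
          right; rw [Set.mem_singleton_iff, hc, hc0def]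
      · rintro (hA | hcc)
        · obtain ⟨r, hr, hopen, hc⟩ := hA; exact ⟨r, hr, Or.inl hopen, hc⟩
        · rw [Set.mem_singleton_iff] at hcc
          exact ⟨r0, hr0, Or.inr hθ1, by rw [hcc, hc0def]⟩
    refine ⟨c0, ?_, ?_⟩
    · rw [hpsi]; exact hc0A
    · rw [hpsi, hpsiR]
  · -- θ0 = r0.θ2 : a chord is removed
    left
    have hpsi : moviePsi P θ0 = A ∪ {c0} := by
      rw [moviePsi_eq]; ext c; constructor
      · rintro ⟨r, hr, hcase, hc⟩
        rcases hcase with hopen | hend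
        · exact Or.inl ⟨r, hr, hopen, hc⟩
        · have hrr := huniq r hr (Or.inr hend)
          subst hrr
          right; rw [Set.mem_singleton_iff, hc, hc0def]
      · rintro (hA | hcc)
        · obtain ⟨r, hr, hopen, hc⟩ := hA; exact ⟨r, hr, Or.inl hopen, hc⟩
        · rw [Set.mem_singleton_iff] at hcc
          exact ⟨r0, hr0, Or.inr hθ2, by rw [hcc, hc0def]⟩
    have hpsiR : moviePsiRight P θ0 = A := by
      rw [moviePsiRight_eq]; ext c; constructor
      · rintro ⟨r, hr, hcase, hc⟩
        rcases hcase with hopen | hend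
        · exact ⟨r, hr, hopen, hc⟩
        · have hrr := huniq r hr (Or.inl hend)
          subst hrr
          exact absurd (hend.symm.trans hθ2) r.hθ
      · rintro ⟨r, hr, hopen, hc⟩; exact ⟨r, hr, Or.inl hopen, hc⟩
    refine ⟨c0, ?_, ?_⟩
    · rw [hpsi]; exact Set.mem_union_right _ rfl
    · rw [hpsi, hpsiR, Set.union_diff_distrib, Set.diff_singleton_eq_self hc0A]
      simp


end RectDiag
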